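/- Every finite connected simple graph with at least two vertices that is {P4, C4}-free has a universal vertex; equivalently, if G is connected, has no induced path on four vertices and no induced cycle on four vertices, then some vertex of G is adjacent to all other vertices. -/

import Mathlib

open SimpleGraph

/-- `G` is `H`-free: no induced subgraph of `G` is isomorphic to `H`
(an induced copy is a graph embedding). -/
def InducedFree {α β : Type*} (H : SimpleGraph β) (G : SimpleGraph α) : Prop :=
  ¬ Nonempty (H ↪g G)

/-- The path on four vertices. -/
def P4 : SimpleGraph (Fin 4) := fromEdgeSet {s(0,1), s(1,2), s(2,3)}

/-- The cycle on four vertices. -/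
def C4 : SimpleGraph (Fin 4) := fromEdgeSet {s(0,1), s(1,2), s(2,3), s(3,0)}

def P4emb {V : Type*} (G : SimpleGraph V) (a b c d : V)
    (hab : G.Adj a b) (hbc : G.Adj b c) (hcd : G.Adj c d)
    (hac : ¬G.Adj a c) (had : ¬G.Adj a d) (hbd : ¬G.Adj b d)
    (hac' : a ≠ c) (had' : a ≠ d) (hbd' : b ≠ d) : P4 ↪g G where
  toFun := ![a,b,c,d]
  inj' := by
    have h1 := hab.ne; have h2 := hbc.ne; have h3 := hcd.ne
    intro i j hij
    fin_cases i <;> fin_cases j <;> simp_all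
  map_rel_iff' := by
    have h1 := hab.symm; have h2 := hbc.symm; have h3 := hcd.symm
    have n1 : ¬ G.Adj c a := fun h => hac h.symm
    have n2 : ¬ G.Adj d a := fun h => had h.symm
    have n3 : ¬ G.Adj d b := fun h => hbd h.symm
    have n4 := G.irrefl (v := a); have n5 := G.irrefl (v := b)
    have n6 := G.irrefl (v := c); have n7 := G.irrefl (v := d)
    intro i j
    change G.Adj (![a,b,c,d] i) (![a,b,c,d] j) ↔ P4.Adj i j
    fin_cases i <;> fin_cases j <;> simp_all [P4]

lemma common_neighbor {V : Type*} {G : SimpleGraph V} (hP4 : InducedFree P4 G) :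
    ∀ {u w : V}, G.Walk u w → ¬ G.Adj u w → u ≠ w →
    ∃ x, G.Adj u x ∧ G.Adj x w := by
  intro u w p
  induction p with
  | nil => intro _ h; exact absurd rfl h
  | @cons a b w hab q ih =>
    intro hnadj hne
    by_cases hbw : b = w
    · subst hbw; exact absurd hab hnadj
    by_cases hadj : G.Adj b w
    · exact ⟨b, hab, hadj⟩
    · obtain ⟨y, hby, hyw⟩ := ih hadj hbw
      by_cases hay : G.Adj a y
      · exact ⟨y, hay, hyw⟩
      · exfalso
        have hayne : a ≠ y := fun h => hnadj (h ▸ hyw)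
        exact hP4 ⟨P4emb G a b y w hab hby hyw hay hnadj hadj hayne hne hbw⟩

def C4emb {V : Type*} (G : SimpleGraph V) (a b c d : V)
    (hab : G.Adj a b) (hbc : G.Adj b c) (hcd : G.Adj c d) (hda : G.Adj d a)
    (hac : ¬G.Adj a c) (hbd : ¬G.Adj b d)
    (hac' : a ≠ c) (hbd' : b ≠ d) : C4 ↪g G where
  toFun := ![a,b,c,d]
  inj' := by
    have h1 := hab.ne; have h2 := hbc.ne; have h3 := hcd.ne; have h4 := hda.ne
    intro i j hij
    fin_cases i <;> fin_cases j <;> simp_all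
  map_rel_iff' := by
    have h1 := hab.symm; have h2 := hbc.symm; have h3 := hcd.symm; have h4 := hda.symm
    have n1 : ¬ G.Adj c a := fun h => hac h.symm
    have n3 : ¬ G.Adj d b := fun h => hbd h.symm
    have n4 := G.irrefl (v := a); have n5 := G.irrefl (v := b)
    have n6 := G.irrefl (v := c); have n7 := G.irrefl (v := d)
    intro i j
    change G.Adj (![a,b,c,d] i) (![a,b,c,d] j) ↔ C4.Adj i j
    fin_cases i <;> fin_cases j <;> simp_all [C4]

theorem trivially_perfect_universal {V : Type*} [Fintype V] (G : SimpleGraph V)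
    (hconn : G.Connected) (hcard : 2 ≤ Fintype.card V)
    (hP4 : InducedFree P4 G) (hC4 : InducedFree C4 G) :
    ∃ u : V, ∀ v : V, v ≠ u → G.Adj u v := by
  classical
  letI : DecidableRel G.Adj := Classical.decRel _
  have hne : Nonempty V := Fintype.card_pos_iff.mp (by omega)
  obtain ⟨u, -, hmax⟩ := Finset.exists_max_image (Finset.univ : Finset V) (fun v => G.degree v)
    ⟨hne.some, Finset.mem_univ _⟩
  refine ⟨u, fun w hwu => ?_⟩
  by_contra hnadj
  have hnadj' : ¬ G.Adj u w := hnadj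
  obtain ⟨x, hux, hxw⟩ := common_neighbor hP4 (hconn u w).some hnadj' (fun h => hwu h.symm)
  -- every neighbor of u other than x is a neighbor of x
  have hall : ∀ y, G.Adj u y → y ≠ x → G.Adj x y := by
    intro y huy hyx
    by_contra hxy
    have hwy' : w ≠ y := fun h => hnadj (h ▸ huy)
    by_cases hwy : G.Adj w y
    · -- C4 on w x u y
      exact hC4 ⟨C4emb G w x u y hxw.symm hux.symm huy hwy.symm
        (fun h => hnadj h.symm) hxy hwu hyx.symm⟩
    · -- P4 on w x u y
      exact hP4 ⟨P4emb G w x u y hxw.symm hux.symm huy (fun h => hnadj h.symm) hwy hxy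
        hwu hwy' hyx.symm⟩
  -- count degrees
  have hxmem : x ∈ G.neighborFinset u := (G.mem_neighborFinset u x).2 hux
  have hsub : insert u (insert w (G.neighborFinset u \ {x})) ⊆ G.neighborFinset x := by
    intro y hy
    simp only [Finset.mem_insert, Finset.mem_sdiff, Finset.mem_singleton,
      SimpleGraph.mem_neighborFinset] at hy ⊢
    rcases hy with rfl | rfl | ⟨hy1, hy2⟩
    · exact hux.symm
    · exact hxw
    · exact hall y hy1 hy2
  have hc1 : (G.neighborFinset u \ {x}).card = G.degree u - 1 := by
    rw [Finset.card_sdiff_of_subset (Finset.singleton_subset_iff.2 hxmem), Finset.card_singleton]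
    rfl
  have hdpos : 1 ≤ G.degree u := Finset.card_pos.2 ⟨x, hxmem⟩
  have hw1 : w ∉ insert w (G.neighborFinset u \ {x}) → False := by simp
  have hwnn : w ∉ G.neighborFinset u \ {x} := by
    simp only [Finset.mem_sdiff, SimpleGraph.mem_neighborFinset]
    exact fun h => hnadj h.1
  have hunn : u ∉ insert w (G.neighborFinset u \ {x}) := by
    simp only [Finset.mem_insert, Finset.mem_sdiff, SimpleGraph.mem_neighborFinset]
    rintro (rfl | ⟨h, -⟩)
    · exact hwu rfl
    · exact G.irrefl h
  have hcard2 : (insert u (insert w (G.neighborFinset u \ {x}))).card = G.degree u + 1 := by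
    rw [Finset.card_insert_of_notMem hunn, Finset.card_insert_of_notMem hwnn, hc1]
    omega
  have hle : G.degree u + 1 ≤ G.degree x := by
    rw [← hcard2]
    exact Finset.card_le_card hsub
  have := hmax x (Finset.mem_univ x)
  omega
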